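/- Let e and f be idempotents of S. Then: (1) if λ ∈ J_e^* and μ ∈ J_f^* lie in the same G̃-orbit in J^*, then there exists ν ∈ J_{ef}^* lying in the same G̃-orbit; (2) two elements λ, μ ∈ J_e^* lie in the same G̃-orbit in J^* if and only if they lie in the same G̃_e-orbit. -/

import Mathlib

lemma aux_lift {A : Type*} [Ring A] {p q r : A} (h : p * q = r) (X : A) :
    p * (q * X) = r * X := by rw [← mul_assoc, h]

lemma aux_left_inv {A : Type*} [Ring A] (J : Ideal A) (hJ : J = (⊥ : Ideal A).jacobson)
    (a : A) (ha : a - 1 ∈ J) : ∃ z : A, z - 1 ∈ J ∧ z * a = 1 := by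
  have h1a : (1 : A) - a ∈ J := by
    have := J.neg_mem ha
    rwa [neg_sub] at this
  have hx : (1 : A) - a ∈ (⊥ : Ideal A).jacobson := hJ ▸ h1a
  obtain ⟨z, hz⟩ := Ideal.mem_jacobson_iff.mp hx (-1)
  have hz0 : z * (-1) * ((1 : A) - a) + z - 1 = 0 := by simpa using hz
  have hza : z * a = 1 := by
    have h0 : z * a - 1 = 0 := by rw [← hz0]; noncomm_ring
    exact sub_eq_zero.mp h0
  have hzJ : z - 1 ∈ J := by
    have hz1 : z - 1 = z * (1 - a) := by rw [mul_sub, mul_one, hza]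
    rw [hz1]; exact J.mul_mem_left z h1a
  exact ⟨z, hzJ, hza⟩

lemma aux_unit {A : Type*} [Ring A] (J : Ideal A) (hJ : J = (⊥ : Ideal A).jacobson)
    (a : A) (ha : a - 1 ∈ J) : ∃ z : A, z - 1 ∈ J ∧ z * a = 1 ∧ a * z = 1 := by
  obtain ⟨z, hzJ, hz⟩ := aux_left_inv J hJ a ha
  obtain ⟨w, hwJ, hw⟩ := aux_left_inv J hJ z hzJ
  have hwa : w = a := by
    calc w = w * (z * a) := by rw [hz, mul_one]
    _ = w * z * a := by rw [mul_assoc]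
    _ = a := by rw [hw, one_mul]
  exact ⟨z, hzJ, hz, by rw [← hwa, hw]⟩

/-- `λ ∈ J_e^*`: the linear form `λ` on `J` satisfies `λ x = λ (e*x*e)` for all `x ∈ J`. -/
def MemJeStar {F A : Type*} [Field F] [Ring A] [Algebra F A]
    (J : Ideal A) (hJr : ∀ x ∈ J, ∀ a : A, x * a ∈ J) (e : A)
    (lam : (Submodule.restrictScalars F J) →ₗ[F] F) : Prop :=
  ∀ x (hx : x ∈ J), lam ⟨x, hx⟩ = lam ⟨e * x * e, hJr _ (J.mul_mem_left e hx) e⟩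

/-- `λ, μ ∈ J^*` lie in the same `G̃`-orbit: `μ x = λ (t * a * x * b * t⁻¹)` for all
`x ∈ J`, where `t ∈ H = S^×` (both `t` and `t⁻¹` lie in `S`) and `a, b ∈ N = 1 + J`. -/
def SameOrbitJStar {F A : Type*} [Field F] [Ring A] [Algebra F A]
    (J : Ideal A) (hJr : ∀ x ∈ J, ∀ a : A, x * a ∈ J) (S : Subalgebra F A)
    (lam mu : (Submodule.restrictScalars F J) →ₗ[F] F) : Prop :=
  ∃ t : Aˣ, (t : A) ∈ S ∧ ((t⁻¹ : Aˣ) : A) ∈ S ∧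
    ∃ a b : A, a - 1 ∈ J ∧ b - 1 ∈ J ∧
      ∀ x (hx : x ∈ J), mu ⟨x, hx⟩ =
        lam ⟨(t : A) * a * x * b * ((t⁻¹ : Aˣ) : A),
          hJr _ (hJr _ (J.mul_mem_left ((t : A) * a) hx) b) ((t⁻¹ : Aˣ) : A)⟩

/-- `λ, μ ∈ J_e^*` lie in the same `G̃_e`-orbit: `μ x = λ (t * a * x * b * s)` for all
`x ∈ J`, where `t ∈ (eSe)ˣ` with inverse `s` (taken in `eAe`, so `t*s = s*t = e`) and
`a, b ∈ e + eJe`. -/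
def SameOrbitJeStar {F A : Type*} [Field F] [Ring A] [Algebra F A]
    (J : Ideal A) (hJr : ∀ x ∈ J, ∀ a : A, x * a ∈ J) (S : Subalgebra F A) (e : A)
    (lam mu : (Submodule.restrictScalars F J) →ₗ[F] F) : Prop :=
  ∃ t s : A, t ∈ S ∧ s ∈ S ∧ e * t = t ∧ t * e = t ∧ e * s = s ∧ s * e = s ∧
    t * s = e ∧ s * t = e ∧
    ∃ a b : A, a - e ∈ J ∧ e * a = a ∧ a * e = a ∧ b - e ∈ J ∧ e * b = b ∧ b * e = b ∧
      ∀ x (hx : x ∈ J), mu ⟨x, hx⟩ =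
        lam ⟨t * a * x * b * s, hJr _ (hJr _ (J.mul_mem_left (t * a) hx) b) s⟩

/-- Lemma 2.7: (1) if `λ ∈ J_e^*` and `μ ∈ J_f^*` lie in the same `G̃`-orbit, then some
`ν ∈ J_{ef}^*` lies in the same `G̃`-orbit as both; (2) two elements of `J_e^*` lie in the
same `G̃`-orbit iff they lie in the same `G̃_e`-orbit. -/
theorem dual_orbit_corner_lemma
    {F A : Type*} [Field F] [Fintype F] [Ring A] [Algebra F A] [FiniteDimensional F A]
    (J : Ideal A) (hJ : J = (⊥ : Ideal A).jacobson)
    (hJr : ∀ x ∈ J, ∀ a : A, x * a ∈ J)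
    (hred : ∀ a b : A, a * b - b * a ∈ J)
    (S : Subalgebra F A)
    (hS : IsCompl (Subalgebra.toSubmodule S) (Submodule.restrictScalars F J))
    (e f : A) (he : IsIdempotentElem e) (heS : e ∈ S)
    (hf : IsIdempotentElem f) (hfS : f ∈ S) :
    (∀ lam mu : (Submodule.restrictScalars F J) →ₗ[F] F,
      MemJeStar J hJr e lam → MemJeStar J hJr f mu →
      SameOrbitJStar J hJr S lam mu →
      ∃ nu : (Submodule.restrictScalars F J) →ₗ[F] F,
        MemJeStar J hJr (e * f) nu ∧
        SameOrbitJStar J hJr S lam nu ∧ SameOrbitJStar J hJr S mu nu) ∧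
    (∀ lam mu : (Submodule.restrictScalars F J) →ₗ[F] F,
      MemJeStar J hJr e lam → MemJeStar J hJr e mu →
      (SameOrbitJStar J hJr S lam mu ↔ SameOrbitJeStar J hJr S e lam mu)) := by
  have hee : e * e = e := he
  have hff : f * f = f := hf
  have hdis : ∀ x : A, x ∈ S → x ∈ J → x = 0 := by
    intro x hxS hxJ
    exact Submodule.disjoint_def.mp hS.disjoint x hxS hxJ
  have hcomm : ∀ x y : A, x ∈ S → y ∈ S → x * y = y * x := by
    intro x y hx hy
    have h1 : x * y - y * x ∈ J := hred x y
    have h2 : x * y - y * x ∈ S := sub_mem (mul_mem hx hy) (mul_mem hy hx)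
    exact sub_eq_zero.mp (hdis _ h2 h1)
  have key : ∀ (L : (Submodule.restrictScalars F J) →ₗ[F] F) (x y : A)
      (hx : x ∈ J) (hy : y ∈ J), x = y → L ⟨x, hx⟩ = L ⟨y, hy⟩ := by
    intro L x y hx hy h; subst h; rfl
  have sandwich : ∀ (g : A) (L : (Submodule.restrictScalars F J) →ₗ[F] F),
      MemJeStar J hJr g L → ∀ (x y : A) (hx : x ∈ J) (hy : y ∈ J),
      g * x * g = g * y * g → L ⟨x, hx⟩ = L ⟨y, hy⟩ := by
    intro g L hL x y hx hy hxy
    calc L ⟨x, hx⟩ = L ⟨g * x * g, hJr _ (J.mul_mem_left g hx) g⟩ := hL x hx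
    _ = L ⟨g * y * g, hJr _ (J.mul_mem_left g hy) g⟩ := key L _ _ _ _ hxy
    _ = L ⟨y, hy⟩ := (hL y hy).symm
  constructor
  · -- Part 1
    rintro lam mu hlam hmu ⟨t, htS, htiS, a, b, ha, hb, hrel⟩
    obtain ⟨ai, haiJ, hai1, hai2⟩ := aux_unit J hJ a ha
    obtain ⟨bi, hbiJ, hbi1, hbi2⟩ := aux_unit J hJ b hb
    set tv : A := (t : A) with htv
    set ti : A := ((t⁻¹ : Aˣ) : A) with hti
    have tvti : tv * ti = 1 := t.mul_inv
    have titv : ti * tv = 1 := t.inv_mul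
    have hcet : e * tv = tv * e := hcomm e tv heS htS
    have hceti : e * ti = ti * e := hcomm e ti heS htiS
    have hfe : f * e = e * f := hcomm f e hfS heS
    let cmap : (Submodule.restrictScalars F J) →ₗ[F] (Submodule.restrictScalars F J) :=
      { toFun := fun x => ⟨e * x.1 * e, hJr _ (J.mul_mem_left e x.2) e⟩
        map_add' := fun x y => Subtype.ext (by simp [mul_add, add_mul])
        map_smul' := fun c x => Subtype.ext (by
          simp [Algebra.mul_smul_comm, Algebra.smul_mul_assoc]) }
    refine ⟨mu.comp cmap, ?_, ?_, ?_⟩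
    · -- ν ∈ J_{ef}^*
      intro x hx
      exact sandwich f mu hmu (e * x * e) (e * ((e * f) * x * (e * f)) * e)
        (hJr _ (J.mul_mem_left e hx) e)
        (hJr _ (J.mul_mem_left e (hJr _ (J.mul_mem_left (e * f) hx) (e * f))) e)
        (by simp only [mul_assoc, hfe, aux_lift hfe, hee, aux_lift hee, hff, aux_lift hff])
    · -- λ and ν in the same orbit
      refine ⟨t, htS, htiS, e * a * e + 1 - e, e * b * e + 1 - e, ?_, ?_, ?_⟩
      · have h1 : e * a * e + 1 - e - 1 = e * (a - 1) * e := by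
          rw [mul_sub, mul_one, sub_mul, hee]; abel
        rw [h1]; exact hJr _ (J.mul_mem_left e ha) e
      · have h1 : e * b * e + 1 - e - 1 = e * (b - 1) * e := by
          rw [mul_sub, mul_one, sub_mul, hee]; abel
        rw [h1]; exact hJr _ (J.mul_mem_left e hb) e
      · intro x hx
        exact (hrel (e * x * e) (hJr _ (J.mul_mem_left e hx) e)).trans
          (sandwich e lam hlam _ _ _ _ (by
            simp only [mul_add, add_mul, mul_sub, sub_mul, mul_one, one_mul, mul_assoc,
              hee, aux_lift hee, hcet, aux_lift hcet, hceti, aux_lift hceti, ← htv, ← hti]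
            abel))
    · -- μ and ν in the same orbit
      refine ⟨1, by simpa using S.one_mem, by simpa using S.one_mem,
        ai * (e * a * e + 1 - e), (e * b * e + 1 - e) * bi, ?_, ?_, ?_⟩
      · have haeJ : e * a * e + 1 - e - a ∈ J := by
          have h1 : e * a * e + 1 - e - a = e * (a - 1) * e - (a - 1) := by
            rw [mul_sub, mul_one, sub_mul, hee]; abel
          rw [h1]; exact sub_mem (hJr _ (J.mul_mem_left e ha) e) ha
        have h2 : ai * (e * a * e + 1 - e) - 1 = ai * (e * a * e + 1 - e - a) := by
          calc ai * (e * a * e + 1 - e) - 1 = ai * (e * a * e + 1 - e) - ai * a := by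
                rw [hai1]
            _ = ai * (e * a * e + 1 - e - a) := (mul_sub ai _ a).symm
        rw [h2]; exact J.mul_mem_left ai haeJ
      · have hbeJ : e * b * e + 1 - e - b ∈ J := by
          have h1 : e * b * e + 1 - e - b = e * (b - 1) * e - (b - 1) := by
            rw [mul_sub, mul_one, sub_mul, hee]; abel
          rw [h1]; exact sub_mem (hJr _ (J.mul_mem_left e hb) e) hb
        have h2 : (e * b * e + 1 - e) * bi - 1 = (e * b * e + 1 - e - b) * bi := by
          calc (e * b * e + 1 - e) * bi - 1 = (e * b * e + 1 - e) * bi - b * bi := by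
                rw [hbi2]
            _ = (e * b * e + 1 - e - b) * bi := (sub_mul _ b bi).symm
        rw [h2]; exact hJr _ hbeJ bi
      · intro x hx
        have hYJ : tv * (e * a * e + 1 - e) * x * (e * b * e + 1 - e) * ti ∈ J :=
          hJr _ (hJr _ (J.mul_mem_left _ hx) _) _
        have hzJ : ai * ti * (tv * (e * a * e + 1 - e) * x * (e * b * e + 1 - e) * ti)
            * tv * bi ∈ J := hJr _ (hJr _ (J.mul_mem_left _ hYJ) _) _
        calc (mu.comp cmap) ⟨x, hx⟩
            = lam ⟨tv * (e * a * e + 1 - e) * x * (e * b * e + 1 - e) * ti, hYJ⟩ := by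
              exact (hrel (e * x * e) (hJr _ (J.mul_mem_left e hx) e)).trans
                (sandwich e lam hlam _ _ _ _ (by
                  simp only [mul_add, add_mul, mul_sub, sub_mul, mul_one, one_mul, mul_assoc,
                    hee, aux_lift hee, hcet, aux_lift hcet, hceti, aux_lift hceti, ← htv, ← hti]
                  abel))
          _ = lam ⟨tv * a * (ai * ti * (tv * (e * a * e + 1 - e) * x * (e * b * e + 1 - e) * ti)
                * tv * bi) * b * ti,
                hJr _ (hJr _ (J.mul_mem_left _ hzJ) _) _⟩ := by
              refine key lam _ _ _ _ ?_
              simp only [mul_assoc, aux_lift hai2, aux_lift hai1, aux_lift hbi1,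
                aux_lift hbi2, aux_lift tvti, aux_lift titv, tvti, titv, one_mul, mul_one]
          _ = mu ⟨ai * ti * (tv * (e * a * e + 1 - e) * x * (e * b * e + 1 - e) * ti)
                * tv * bi, hzJ⟩ := (hrel _ hzJ).symm
          _ = mu ⟨((1 : Aˣ) : A) * (ai * (e * a * e + 1 - e)) * x
                * ((e * b * e + 1 - e) * bi) * (((1⁻¹ : Aˣ) : A)),
                hJr _ (hJr _ (J.mul_mem_left _ hx) _) _⟩ := by
              refine key mu _ _ _ _ ?_
              simp only [inv_one, Units.val_one, one_mul, mul_one, mul_assoc,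
                aux_lift tvti, aux_lift titv, tvti, titv]
  · -- Part 2
    rintro lam mu hlam hmu
    constructor
    · rintro ⟨t, htS, htiS, a, b, ha, hb, hrel⟩
      set tv : A := (t : A) with htv
      set ti : A := ((t⁻¹ : Aˣ) : A) with hti
      have tvti : tv * ti = 1 := t.mul_inv
      have titv : ti * tv = 1 := t.inv_mul
      have hcet : e * tv = tv * e := hcomm e tv heS htS
      have hceti : e * ti = ti * e := hcomm e ti heS htiS
      refine ⟨e * tv, e * ti, mul_mem heS htS, mul_mem heS htiS, ?_, ?_, ?_, ?_, ?_, ?_,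
        e * a * e, e * b * e, ?_, ?_, ?_, ?_, ?_, ?_, ?_⟩
      · simp only [mul_assoc, aux_lift hee]
      · simp only [mul_assoc, hcet, aux_lift hcet, hee, aux_lift hee]
      · simp only [mul_assoc, aux_lift hee]
      · simp only [mul_assoc, hceti, aux_lift hceti, hee, aux_lift hee]
      · simp only [mul_assoc, hcet, aux_lift hcet, hceti, aux_lift hceti, hee,
          aux_lift hee, tvti, aux_lift tvti, one_mul, mul_one]
      · simp only [mul_assoc, hcet, aux_lift hcet, hceti, aux_lift hceti, hee,
          aux_lift hee, titv, aux_lift titv, one_mul, mul_one]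
      · have h1 : e * a * e - e = e * (a - 1) * e := by
          rw [mul_sub, mul_one, sub_mul, hee]
        rw [h1]; exact hJr _ (J.mul_mem_left e ha) e
      · simp only [mul_assoc, aux_lift hee]
      · simp only [mul_assoc, hee, aux_lift hee]
      · have h1 : e * b * e - e = e * (b - 1) * e := by
          rw [mul_sub, mul_one, sub_mul, hee]
        rw [h1]; exact hJr _ (J.mul_mem_left e hb) e
      · simp only [mul_assoc, aux_lift hee]
      · simp only [mul_assoc, hee, aux_lift hee]
      · intro x hx
        calc mu ⟨x, hx⟩ = mu ⟨e * x * e, hJr _ (J.mul_mem_left e hx) e⟩ := hmu x hx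
          _ = lam ⟨tv * a * (e * x * e) * b * ti,
              hJr _ (hJr _ (J.mul_mem_left _ (hJr _ (J.mul_mem_left e hx) e)) _) _⟩ :=
            hrel (e * x * e) (hJr _ (J.mul_mem_left e hx) e)
          _ = lam ⟨(e * tv) * (e * a * e) * x * (e * b * e) * (e * ti),
              hJr _ (hJr _ (J.mul_mem_left _ hx) _) _⟩ := by
            refine sandwich e lam hlam _ _ _ _ ?_
            simp only [mul_assoc, hcet, aux_lift hcet, hceti, aux_lift hceti, hee,
              aux_lift hee]
    · rintro ⟨t, s, htS, hsS, het, hte, hes, hse, hts, hst, a, b, haJ, hea, hae,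
        hbJ, heb, hbe, hrel⟩
      have hv1 : (t + 1 - e) * (s + 1 - e) = 1 := by
        simp only [sub_mul, mul_sub, add_mul, mul_add, mul_one, one_mul, hts, hte, hes, hee]
        abel
      have hv2 : (s + 1 - e) * (t + 1 - e) = 1 := by
        simp only [sub_mul, mul_sub, add_mul, mul_add, mul_one, one_mul, hst, hse, het, hee]
        abel
      refine ⟨⟨t + 1 - e, s + 1 - e, hv1, hv2⟩, ?_, ?_, a + 1 - e, b + 1 - e, ?_, ?_, ?_⟩
      · exact sub_mem (add_mem htS S.one_mem) heS
      · exact sub_mem (add_mem hsS S.one_mem) heS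
      · have h1 : a + 1 - e - 1 = a - e := by abel
        rw [h1]; exact haJ
      · have h1 : b + 1 - e - 1 = b - e := by abel
        rw [h1]; exact hbJ
      · intro x hx
        refine (hrel x hx).trans (sandwich e lam hlam _ _ _ _ ?_)
        show e * (t * a * x * b * s) * e
            = e * ((t + 1 - e) * (a + 1 - e) * x * (b + 1 - e) * (s + 1 - e)) * e
        simp only [mul_add, add_mul, mul_sub, sub_mul, mul_one, one_mul, mul_assoc,
          hee, aux_lift hee, aux_lift het, aux_lift hte, aux_lift hea, aux_lift hae,
          aux_lift heb, aux_lift hbe, aux_lift hes, aux_lift hse, het, hte, hea, hae,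
          heb, hbe, hes, hse]
        abel
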